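/- Under exact EGPO updates with learning rate η satisfying 0 < η ≤ 1/(β+3), for every T ≥ 1 one has KL(π*_β ‖ π^{(T)}) ≤ KL(π*_β ‖ π^{(0)}) · (1 − ηβ)^T. -/

import Mathlib

open Real

/-- Tabular softmax policy. -/
noncomputable def softmax {Y : Type*} [Fintype Y] (θ : Y → ℝ) : Y → ℝ :=
  fun y => Real.exp (θ y) / ∑ y', Real.exp (θ y')

/-- Kullback–Leibler divergence between distributions on a finite set. -/
noncomputable def KLdiv {Y : Type*} [Fintype Y] (p q : Y → ℝ) : ℝ :=
  ∑ y, p y * Real.log (p y / q y)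

/-- `(P π)(y) = ∑ y' P(y, y') π(y')`. -/
noncomputable def matVec {Y : Type*} [Fintype Y] (P : Y → Y → ℝ) (p : Y → ℝ) : Y → ℝ :=
  fun y => ∑ y', P y y' * p y'

open Finset

section Basics
variable {Y : Type*} [Fintype Y] [Nonempty Y]

noncomputable def Zf (θ : Y → ℝ) : ℝ := ∑ y, Real.exp (θ y)

lemma Zf_pos (θ : Y → ℝ) : 0 < Zf θ :=
  Finset.sum_pos (fun y _ => Real.exp_pos _) Finset.univ_nonempty

lemma softmax_eq (θ : Y → ℝ) (y : Y) : softmax θ y = Real.exp (θ y) / Zf θ := rfl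

lemma softmax_pos (θ : Y → ℝ) (y : Y) : 0 < softmax θ y :=
  div_pos (Real.exp_pos _) (Zf_pos θ)

lemma softmax_sum (θ : Y → ℝ) : ∑ y, softmax θ y = 1 := by
  rw [show (fun y => softmax θ y) = fun y => Real.exp (θ y) / Zf θ from rfl]
  rw [← Finset.sum_div]
  exact div_self (Zf_pos θ).ne'

lemma log_softmax (θ : Y → ℝ) (y : Y) :
    Real.log (softmax θ y) = θ y - Real.log (Zf θ) := by
  rw [softmax_eq, Real.log_div (Real.exp_ne_zero _) (Zf_pos θ).ne', Real.log_exp]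

lemma KLdiv_self_softmax (χ : Y → ℝ) : KLdiv (softmax χ) (softmax χ) = 0 := by
  unfold KLdiv
  refine Finset.sum_eq_zero fun y _ => ?_
  rw [div_self (softmax_pos χ y).ne', Real.log_one, mul_zero]

lemma KL_eq (χ a : Y → ℝ) :
    KLdiv (softmax χ) (softmax a)
      = (∑ y, softmax χ y * (χ y - a y)) + Real.log (Zf a) - Real.log (Zf χ) := by
  unfold KLdiv
  have h1 : ∀ y, softmax χ y * Real.log (softmax χ y / softmax a y)
      = softmax χ y * (χ y - a y) + softmax χ y * (Real.log (Zf a) - Real.log (Zf χ)) := by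
    intro y
    rw [Real.log_div (softmax_pos χ y).ne' (softmax_pos a y).ne', log_softmax, log_softmax]
    ring
  calc (∑ y, softmax χ y * Real.log (softmax χ y / softmax a y))
      = ∑ y, (softmax χ y * (χ y - a y)
          + softmax χ y * (Real.log (Zf a) - Real.log (Zf χ))) :=
        Finset.sum_congr rfl fun y _ => h1 y
    _ = (∑ y, softmax χ y * (χ y - a y))
          + (∑ y, softmax χ y) * (Real.log (Zf a) - Real.log (Zf χ)) := by
        rw [Finset.sum_add_distrib, ← Finset.sum_mul]
    _ = _ := by rw [softmax_sum]; ring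

lemma threept (x z a b : Y → ℝ) :
    KLdiv (softmax x) (softmax a) - KLdiv (softmax x) (softmax b)
      = KLdiv (softmax z) (softmax a) - KLdiv (softmax z) (softmax b)
        + ∑ y, (softmax z y - softmax x y) * (a y - b y) := by
  have e : ∑ y, (softmax z y - softmax x y) * (a y - b y)
      = ((∑ y, softmax x y * (x y - a y)) - ∑ y, softmax x y * (x y - b y))
        - ((∑ y, softmax z y * (z y - a y)) - ∑ y, softmax z y * (z y - b y)) := by
    rw [← Finset.sum_sub_distrib, ← Finset.sum_sub_distrib, ← Finset.sum_sub_distrib]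
    exact Finset.sum_congr rfl fun y _ => by ring
  rw [KL_eq, KL_eq, KL_eq, KL_eq, e]; ring

end Basics

section Part2
variable {Y : Type*} [Fintype Y] [Nonempty Y]

lemma skew_self (P : Y → Y → ℝ) (hPsum : ∀ y y', P y y' + P y' y = 1)
    (v : Y → ℝ) (hv : ∑ y, v y = 0) :
    ∑ y, v y * matVec P v y = 0 := by
  have hS : (∑ y, v y * matVec P v y) = ∑ y, ∑ y', v y * (P y y' * v y') := by
    unfold matVec; exact Finset.sum_congr rfl fun y _ => Finset.mul_sum _ _ _
  have hS2 : (∑ y, v y * matVec P v y) = ∑ y, ∑ y', v y' * (P y' y * v y) := by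
    rw [hS]; exact Finset.sum_comm
  have hdouble : (∑ y, v y * matVec P v y) + (∑ y, v y * matVec P v y)
      = ∑ y, ∑ y', v y * v y' := by
    nth_rewrite 1 [hS]
    nth_rewrite 1 [hS2]
    rw [← Finset.sum_add_distrib]
    refine Finset.sum_congr rfl fun y _ => ?_
    rw [← Finset.sum_add_distrib]
    refine Finset.sum_congr rfl fun y' _ => ?_
    linear_combination v y * v y' * hPsum y y'
  have hzero : (∑ y, ∑ y', v y * v y') = 0 := by
    rw [show (∑ y, ∑ y', v y * v y') = ∑ y, v y * ∑ y', v y' from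
      Finset.sum_congr rfl fun y _ => (Finset.mul_sum _ _ _).symm]
    rw [hv]
    simp
  linarith [hdouble, hzero]

lemma matVec_bound (P : Y → Y → ℝ) (hP0 : ∀ y y', 0 ≤ P y y') (hP1 : ∀ y y', P y y' ≤ 1)
    (v : Y → ℝ) (hv : ∑ y, v y = 0) (y : Y) :
    |matVec P v y| ≤ (∑ y', |v y'|) / 2 := by
  have key : matVec P v y = ∑ y', (P y y' - 1/2) * v y' := by
    unfold matVec
    rw [show (fun y' => (P y y' - 1/2) * v y') = fun y' => P y y' * v y' - (1/2) * v y' from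
      funext fun y' => by ring]
    rw [Finset.sum_sub_distrib, ← Finset.mul_sum, hv, mul_zero, sub_zero]
  rw [key]
  calc |∑ y', (P y y' - 1/2) * v y'| ≤ ∑ y', |(P y y' - 1/2) * v y'| :=
        Finset.abs_sum_le_sum_abs _ _
    _ ≤ ∑ y', (1/2) * |v y'| := by
        refine Finset.sum_le_sum fun y' _ => ?_
        rw [abs_mul]
        refine mul_le_mul_of_nonneg_right ?_ (abs_nonneg _)
        rw [abs_le]
        constructor <;> [linarith [hP0 y y']; linarith [hP1 y y']]
    _ = (∑ y', |v y'|) / 2 := by rw [← Finset.mul_sum]; ring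
end Part2

section Part3
variable {Y : Type*} [Fintype Y] [Nonempty Y]

lemma hellinger_le (a b : Y → ℝ) :
    2 - 2 * ∑ y, Real.sqrt (softmax a y) * Real.sqrt (softmax b y)
      ≤ KLdiv (softmax a) (softmax b) := by
  set x := softmax a with hx
  set z := softmax b with hz
  have hxp : ∀ y, 0 < x y := softmax_pos a
  have hzp : ∀ y, 0 < z y := softmax_pos b
  have key : ∀ y, 2 * x y - 2 * (Real.sqrt (x y) * Real.sqrt (z y))
      ≤ x y * Real.log (x y / z y) := by
    intro y
    have ht : 0 < Real.sqrt (z y / x y) := Real.sqrt_pos.mpr (div_pos (hzp y) (hxp y))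
    have hlog : Real.log (z y / x y) ≤ 2 * (Real.sqrt (z y / x y) - 1) := by
      have h1 : Real.log (Real.sqrt (z y / x y)) ≤ Real.sqrt (z y / x y) - 1 :=
        Real.log_le_sub_one_of_pos ht
      have h2 : Real.log (Real.sqrt (z y / x y)) = Real.log (z y / x y) / 2 :=
        Real.log_sqrt (le_of_lt (div_pos (hzp y) (hxp y)))
      linarith
    have hneg : Real.log (x y / z y) = - Real.log (z y / x y) := by
      rw [← Real.log_inv, inv_div]
    have hmul : x y * Real.sqrt (z y / x y) = Real.sqrt (x y) * Real.sqrt (z y) := by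
      have hxx : x y = Real.sqrt (x y) * Real.sqrt (x y) := (Real.mul_self_sqrt (hxp y).le).symm
      have hsx : Real.sqrt (x y) ≠ 0 := ne_of_gt (Real.sqrt_pos.mpr (hxp y))
      rw [Real.sqrt_div (hzp y).le]
      rw [hxx]
      field_simp
      rw [Real.sqrt_sq (Real.sqrt_nonneg _)]; ring
    have : 2 * (1 - Real.sqrt (z y / x y)) ≤ Real.log (x y / z y) := by
      rw [hneg]; linarith
    have := mul_le_mul_of_nonneg_left this (le_of_lt (hxp y))
    calc 2 * x y - 2 * (Real.sqrt (x y) * Real.sqrt (z y))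
        = x y * (2 * (1 - Real.sqrt (z y / x y))) := by rw [← hmul]; ring
      _ ≤ x y * Real.log (x y / z y) := this
  have hsum : ∑ y, (2 * x y - 2 * (Real.sqrt (x y) * Real.sqrt (z y)))
      ≤ ∑ y, x y * Real.log (x y / z y) := Finset.sum_le_sum fun y _ => key y
  have hL : ∑ y, (2 * x y - 2 * (Real.sqrt (x y) * Real.sqrt (z y)))
      = 2 - 2 * ∑ y, Real.sqrt (x y) * Real.sqrt (z y) := by
    rw [Finset.sum_sub_distrib, ← Finset.mul_sum, ← Finset.mul_sum, softmax_sum]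
    ring
  rw [← hL]
  exact hsum

lemma pinsker4 (a b : Y → ℝ) :
    (∑ y, |softmax a y - softmax b y|) ^ 2 ≤ 4 * KLdiv (softmax a) (softmax b) := by
  set x := softmax a with hx
  set z := softmax b with hz
  have hxp : ∀ y, 0 < x y := softmax_pos a
  have hzp : ∀ y, 0 < z y := softmax_pos b
  set S := ∑ y, Real.sqrt (x y) * Real.sqrt (z y) with hS
  have hS1 : S ≤ 1 := by
    have : ∀ y ∈ Finset.univ, Real.sqrt (x y) * Real.sqrt (z y) ≤ (x y + z y) / 2 := by
      intro y _
      nlinarith [sq_nonneg (Real.sqrt (x y) - Real.sqrt (z y)),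
        Real.sq_sqrt (hxp y).le, Real.sq_sqrt (hzp y).le]
    calc S ≤ ∑ y, (x y + z y) / 2 := Finset.sum_le_sum this
      _ = 1 := by
        rw [show (fun y => (x y + z y)/2) = fun y => x y / 2 + z y / 2 from
          funext fun y => by ring]
        rw [Finset.sum_add_distrib, ← Finset.sum_div, ← Finset.sum_div,
          softmax_sum, softmax_sum]
        norm_num
  have hS0 : 0 ≤ S := Finset.sum_nonneg fun y _ =>
    mul_nonneg (Real.sqrt_nonneg _) (Real.sqrt_nonneg _)
  -- Cauchy-Schwarz
  have hCS : (∑ y, |x y - z y|) ^ 2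
      ≤ (∑ y, |Real.sqrt (x y) - Real.sqrt (z y)| ^ 2)
        * ∑ y, (Real.sqrt (x y) + Real.sqrt (z y)) ^ 2 := by
    have e : ∀ y, |x y - z y|
        = |Real.sqrt (x y) - Real.sqrt (z y)| * (Real.sqrt (x y) + Real.sqrt (z y)) := by
      intro y
      have : x y - z y = (Real.sqrt (x y) - Real.sqrt (z y))
          * (Real.sqrt (x y) + Real.sqrt (z y)) := by
        nlinarith [Real.sq_sqrt (hxp y).le, Real.sq_sqrt (hzp y).le]
      rw [this, abs_mul, abs_of_nonneg (add_nonneg (Real.sqrt_nonneg _) (Real.sqrt_nonneg _))]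
    rw [show (fun y => |x y - z y|)
        = fun y => |Real.sqrt (x y) - Real.sqrt (z y)| * (Real.sqrt (x y) + Real.sqrt (z y))
      from funext e]
    exact Finset.sum_mul_sq_le_sq_mul_sq _ _ _
  have hH : (∑ y, |Real.sqrt (x y) - Real.sqrt (z y)| ^ 2) = 2 - 2 * S := by
    rw [show (fun y => |Real.sqrt (x y) - Real.sqrt (z y)| ^ 2)
        = fun y => x y + z y - 2 * (Real.sqrt (x y) * Real.sqrt (z y)) from funext fun y => by
      rw [sq_abs]
      nlinarith [Real.sq_sqrt (hxp y).le, Real.sq_sqrt (hzp y).le]]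
    rw [Finset.sum_sub_distrib, Finset.sum_add_distrib, ← Finset.mul_sum,
      softmax_sum, softmax_sum]
    ring
  have hG : (∑ y, (Real.sqrt (x y) + Real.sqrt (z y)) ^ 2) = 2 + 2 * S := by
    rw [show (fun y => (Real.sqrt (x y) + Real.sqrt (z y)) ^ 2)
        = fun y => x y + z y + 2 * (Real.sqrt (x y) * Real.sqrt (z y)) from funext fun y => by
      nlinarith [Real.sq_sqrt (hxp y).le, Real.sq_sqrt (hzp y).le]]
    rw [Finset.sum_add_distrib, Finset.sum_add_distrib, ← Finset.mul_sum,
      softmax_sum, softmax_sum, ← hS]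
    ring
  have hHel := hellinger_le a b
  rw [← hx, ← hz, ← hS] at hHel
  calc (∑ y, |x y - z y|) ^ 2 ≤ (2 - 2 * S) * (2 + 2 * S) := by
        rw [← hH, ← hG]; exact hCS
    _ ≤ 4 * KLdiv x z := by nlinarith [hHel, hS1, hS0]

end Part3

section Part4
variable {Y : Type*} [Fintype Y] [Nonempty Y]

lemma KLdiv_nonneg_softmax (a b : Y → ℝ) : 0 ≤ KLdiv (softmax a) (softmax b) := by
  have h := pinsker4 a b
  nlinarith [sq_nonneg (∑ y, |softmax a y - softmax b y|)]

lemma matVec_lin (P : Y → Y → ℝ) (f g : Y → ℝ) (y : Y) :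
    matVec P (fun y' => f y' - g y') y = matVec P f y - matVec P g y := by
  unfold matVec
  rw [← Finset.sum_sub_distrib]
  exact Finset.sum_congr rfl fun y' _ => by ring

set_option maxHeartbeats 1000000 in
lemma onestep
    (P : Y → Y → ℝ)
    (hP0 : ∀ y y', 0 ≤ P y y') (hP1 : ∀ y y', P y y' ≤ 1)
    (hPsum : ∀ y y', P y y' + P y' y = 1)
    (β : ℝ) (hβ : 0 < β)
    (θref θstar : Y → ℝ)
    (hstar : θstar = fun y => θref y + matVec P (softmax θstar) y / β)
    (η : ℝ) (hη : 0 < η) (hη' : η ≤ 1 / (β + 3))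
    (a h n : Y → ℝ)
    (hh : h = fun y => (1 - η * β) * a y + η * β * (θref y + matVec P (softmax a) y / β))
    (hn : n = fun y => (1 - η * β) * a y + η * β * (θref y + matVec P (softmax h) y / β)) :
    KLdiv (softmax θstar) (softmax n) ≤ (1 - η * β) * KLdiv (softmax θstar) (softmax a) := by
  have hβ' : β ≠ 0 := hβ.ne'
  have hηβ3 : η * (β + 3) ≤ 1 := by
    rw [le_div_iff₀ (by linarith)] at hη'
    exact hη'
  -- pointwise identities
  have hexp : ∀ (c M : ℝ), η * β * (c + M / β) = η * β * c + η * M := by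
    intro c M; field_simp
  have e1 : ∀ y, n y = (1 - η * β) * a y + (η * β * θref y + η * matVec P (softmax h) y) := by
    intro y
    have := congrFun hn y
    rw [hexp] at this
    exact this
  have eh : ∀ y, h y = (1 - η * β) * a y + (η * β * θref y + η * matVec P (softmax a) y) := by
    intro y
    have := congrFun hh y
    rw [hexp] at this
    exact this
  have e2 : ∀ y, β * θstar y = β * θref y + matVec P (softmax θstar) y := by
    intro y
    have := congrFun hstar y
    rw [this]
    field_simp
  have hna : ∀ y, n y - a y = η * β * (θstar y - a y)
      + η * (matVec P (softmax h) y - matVec P (softmax θstar) y) := by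
    intro y
    linear_combination e1 y - η * e2 y
  have hnh : ∀ y, n y - h y
      = η * matVec P (fun y' => softmax h y' - softmax a y') y := by
    intro y
    rw [matVec_lin]
    linear_combination e1 y - eh y
  -- three-point identities
  have T1 := threept θstar n n a
  have T2 := threept h n h a
  have T3 := threept θstar h θstar a
  rw [KLdiv_self_softmax] at T1 T2 T3
  -- sum splitting
  have SP : ∑ y, (softmax n y - softmax θstar y) * (n y - a y)
      = (∑ y, (softmax h y - softmax θstar y) * (n y - a y))
        + (∑ y, (softmax n y - softmax h y) * (n y - h y))
        + ∑ y, (softmax n y - softmax h y) * (h y - a y) := by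
    rw [← Finset.sum_add_distrib, ← Finset.sum_add_distrib]
    exact Finset.sum_congr rfl fun y _ => by ring
  -- main term
  have hzs : ∑ y, (softmax h y - softmax θstar y) = 0 := by
    rw [Finset.sum_sub_distrib, softmax_sum, softmax_sum]; ring
  have hskew : ∑ y, (softmax h y - softmax θstar y)
      * matVec P (fun y' => softmax h y' - softmax θstar y') y = 0 :=
    skew_self P hPsum _ hzs
  have MD : ∑ y, (softmax h y - softmax θstar y) * (n y - a y)
      = η * β * (∑ y, (softmax h y - softmax θstar y) * (θstar y - a y))
        + η * ∑ y, (softmax h y - softmax θstar y)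
            * matVec P (fun y' => softmax h y' - softmax θstar y') y := by
    rw [Finset.mul_sum, Finset.mul_sum, ← Finset.sum_add_distrib]
    refine Finset.sum_congr rfl fun y _ => ?_
    rw [hna y, matVec_lin]
    ring
  rw [hskew, mul_zero, add_zero] at MD
  -- error term
  have hrq0 : ∑ y, (softmax h y - softmax a y) = 0 := by
    rw [Finset.sum_sub_distrib, softmax_sum, softmax_sum]; ring
  set A := ∑ y, |softmax n y - softmax h y| with hA
  set B := ∑ y, |softmax h y - softmax a y| with hB
  have hA0 : 0 ≤ A := Finset.sum_nonneg fun y _ => abs_nonneg _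
  have hB0 : 0 ≤ B := Finset.sum_nonneg fun y _ => abs_nonneg _
  have hMb : ∀ y, |matVec P (fun y' => softmax h y' - softmax a y') y| ≤ B / 2 :=
    fun y => matVec_bound P hP0 hP1 _ hrq0 y
  have EB : ∑ y, (softmax n y - softmax h y) * (n y - h y) ≤ η * (A * (B / 2)) := by
    have e : ∑ y, (softmax n y - softmax h y) * (n y - h y)
        = η * ∑ y, (softmax n y - softmax h y)
            * matVec P (fun y' => softmax h y' - softmax a y') y := by
      rw [Finset.mul_sum]
      exact Finset.sum_congr rfl fun y _ => by rw [hnh y]; ring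
    rw [e]
    refine mul_le_mul_of_nonneg_left ?_ hη.le
    calc ∑ y, (softmax n y - softmax h y)
            * matVec P (fun y' => softmax h y' - softmax a y') y
        ≤ ∑ y, |(softmax n y - softmax h y)
            * matVec P (fun y' => softmax h y' - softmax a y') y| :=
          Finset.sum_le_sum fun y _ => le_abs_self _
      _ ≤ ∑ y, |softmax n y - softmax h y| * (B / 2) := by
          refine Finset.sum_le_sum fun y _ => ?_
          rw [abs_mul]
          exact mul_le_mul_of_nonneg_left (hMb y) (abs_nonneg _)
      _ = A * (B / 2) := by rw [← Finset.sum_mul]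
  -- Pinsker bounds
  have hA2 : A ^ 2 ≤ 4 * KLdiv (softmax n) (softmax h) := pinsker4 n h
  have hB2 : B ^ 2 ≤ 4 * KLdiv (softmax h) (softmax a) := pinsker4 h a
  have hKLsr0 : 0 ≤ KLdiv (softmax n) (softmax h) := KLdiv_nonneg_softmax n h
  have hKLrq0 : 0 ≤ KLdiv (softmax h) (softmax a) := KLdiv_nonneg_softmax h a
  have hKLrp0 : 0 ≤ KLdiv (softmax h) (softmax θstar) := KLdiv_nonneg_softmax h θstar
  have habs : η * (A * (B / 2))
      ≤ η * (KLdiv (softmax n) (softmax h) + KLdiv (softmax h) (softmax a)) := by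
    refine mul_le_mul_of_nonneg_left ?_ hη.le
    nlinarith [sq_nonneg (A - B)]
  -- combine
  have d1 : 0 ≤ η * β * KLdiv (softmax h) (softmax θstar) :=
    mul_nonneg (mul_nonneg hη.le hβ.le) hKLrp0
  have d2 : (η * β - 1 + η) * KLdiv (softmax h) (softmax a) ≤ 0 := by
    have hc : η * β - 1 + η ≤ 0 := by nlinarith
    nlinarith
  have d3 : (η - 1) * KLdiv (softmax n) (softmax h) ≤ 0 := by
    have hc : η - 1 ≤ 0 := by nlinarith
    nlinarith
  set KLps := KLdiv (softmax θstar) (softmax n) with hKLps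
  set KLpq := KLdiv (softmax θstar) (softmax a) with hKLpq
  set KLsq := KLdiv (softmax n) (softmax a) with hKLsq
  set KLsr := KLdiv (softmax n) (softmax h) with hKLsr
  set KLrq := KLdiv (softmax h) (softmax a) with hKLrq
  set KLrp := KLdiv (softmax h) (softmax θstar) with hKLrp
  set Ssp := ∑ y, (softmax n y - softmax θstar y) * (n y - a y) with hSsp
  set Srp := ∑ y, (softmax h y - softmax θstar y) * (n y - a y) with hSrp
  set Snh := ∑ y, (softmax n y - softmax h y) * (n y - h y) with hSnh
  set Sha := ∑ y, (softmax n y - softmax h y) * (h y - a y) with hSha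
  set St := ∑ y, (softmax h y - softmax θstar y) * (θstar y - a y) with hSt
  clear_value KLps KLpq KLsq KLsr KLrq KLrp Ssp Srp Snh Sha St
  have hSt2 : St = KLrq - KLrp - KLpq := by linarith [T3]
  have MD2 : Srp = η * β * KLrq - η * β * KLrp - η * β * KLpq := by
    rw [MD, hSt2]; ring
  linarith [T1, T2, SP, MD2, EB, habs, d1, d2, d3]
end Part4


/-- under exact EGPO updates with `0 < η ≤ 1/(β+3)`, for every `T ≥ 1`,
`KL(π*_β ‖ π^{(T)}) ≤ KL(π*_β ‖ π^{(0)}) · (1 − ηβ)^T`. -/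
theorem egpo_exact_linear_convergence_kl
    {Y : Type*} [Fintype Y] (hY : 2 ≤ Fintype.card Y)
    (P : Y → Y → ℝ)
    (hP0 : ∀ y y', 0 ≤ P y y') (hP1 : ∀ y y', P y y' ≤ 1)
    (hPsum : ∀ y y', P y y' + P y' y = 1)
    (β : ℝ) (hβ : 0 < β)
    (θref : Y → ℝ)
    (θstar : Y → ℝ)
    (hstar : θstar = fun y => θref y + matVec P (softmax θstar) y / β)
    (η : ℝ) (hη : 0 < η) (hη' : η ≤ 1 / (β + 3))
    (θ θhalf : ℕ → Y → ℝ)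
    (hhalf : ∀ t, θhalf t = fun y =>
      (1 - η * β) * θ t y + η * β * (θref y + matVec P (softmax (θ t)) y / β))
    (hstep : ∀ t, θ (t + 1) = fun y =>
      (1 - η * β) * θ t y + η * β * (θref y + matVec P (softmax (θhalf t)) y / β))
    (T : ℕ) (hT : 1 ≤ T) :
    KLdiv (softmax θstar) (softmax (θ T))
      ≤ KLdiv (softmax θstar) (softmax (θ 0)) * (1 - η * β) ^ T := by
  have : Nonempty Y := Fintype.card_pos_iff.mp (by omega)
  have hηβ3 : η * (β + 3) ≤ 1 := by
    rw [le_div_iff₀ (by linarith)] at hη'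
    exact hη'
  have h1κ : 0 ≤ 1 - η * β := by nlinarith
  have key : ∀ t, KLdiv (softmax θstar) (softmax (θ t))
      ≤ KLdiv (softmax θstar) (softmax (θ 0)) * (1 - η * β) ^ t := by
    intro t
    induction t with
    | zero => simp
    | succ t ih =>
      have step := onestep P hP0 hP1 hPsum β hβ θref θstar hstar η hη hη'
        (θ t) (θhalf t) (θ (t + 1)) (hhalf t) (hstep t)
      calc KLdiv (softmax θstar) (softmax (θ (t + 1)))
          ≤ (1 - η * β) * KLdiv (softmax θstar) (softmax (θ t)) := step
        _ ≤ (1 - η * β) * (KLdiv (softmax θstar) (softmax (θ 0)) * (1 - η * β) ^ t) :=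
            mul_le_mul_of_nonneg_left ih h1κ
        _ = KLdiv (softmax θstar) (softmax (θ 0)) * (1 - η * β) ^ (t + 1) := by ring
  exact key T
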